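/- Let r ≥ 1, let Q' ⊆ ℝ^d be a finite point set with weights w' : Q' → ℝ_{>0}, let Z = {z_1,…,z_k} ⊆ ℝ^d with |Z| = k, and let t' ≥ 0. A fractional assignment is a function f : Q' × Z → ℝ_{≥0} with Σ_{z∈Z} f(p,z) = w'(p) for every p ∈ Q' and Σ_{p∈Q'} f(p,z_i) ≤ t' for every i ∈ [k]; its cost is Σ_{p,z} f(p,z)·dist(p,z)^r. If some fractional assignment exists, then there exists an (integral) assignment π : Q' → Z such that Σ_{p∈Q'} w'(p)·dist(p,π(p))^r is at most the minimum cost over all fractional assignments, and s(π)_i ≤ t' + (k−1)·max_{p∈Q'} w'(p) for every i ∈ [k]. -/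

import Mathlib

open scoped Classical

open Finset

lemma exists_kernel_vector {A B : Type*} [Fintype A] [Fintype B]
    (i₀ : B) (E : Finset (A × B))
    (hE : Fintype.card A + Fintype.card B ≤ E.card) :
    ∃ G : A → B → ℝ, (∃ p i, G p i ≠ 0) ∧ (∀ p i, (p, i) ∉ E → G p i = 0) ∧
      (∀ p, ∑ i, G p i = 0) ∧ (∀ i, ∑ p, G p i = 0) := by
  classical
  let L : ({e // e ∈ E} → ℝ) →ₗ[ℝ] (A → ℝ) × ({i : B // i ≠ i₀} → ℝ) :=
    { toFun := fun g =>
        (fun p => ∑ e ∈ univ.filter (fun e : {e // e ∈ E} => (e : A × B).1 = p), g e,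
         fun i => ∑ e ∈ univ.filter (fun e : {e // e ∈ E} => (e : A × B).2 = i.1), g e)
      map_add' := by
        intro g h
        refine Prod.ext ?_ ?_ <;> funext x <;> simp [Finset.sum_add_distrib]
      map_smul' := by
        intro c g
        refine Prod.ext ?_ ?_ <;> funext x <;> simp [Finset.mul_sum] }
  have hB : 1 ≤ Fintype.card B := Fintype.card_pos_iff.2 ⟨i₀⟩
  have hni : ¬ Function.Injective L := by
    intro h
    have hle := LinearMap.finrank_le_finrank_of_injective h
    rw [Module.finrank_pi, Module.finrank_prod, Module.finrank_pi, Module.finrank_pi,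
      Fintype.card_coe] at hle
    have hcs : Fintype.card {i : B // i ≠ i₀} = Fintype.card B - 1 := by
      rw [Fintype.card_subtype_compl, Fintype.card_subtype_eq]
    rw [hcs] at hle
    omega
  obtain ⟨a, b, hab, hne⟩ := Function.not_injective_iff.mp hni
  set g : {e // e ∈ E} → ℝ := a - b with hg
  have hLg : L g = 0 := by rw [hg, map_sub, hab, sub_self]
  have hgne : g ≠ 0 := sub_ne_zero.mpr hne
  obtain ⟨e₀, he₀⟩ := Function.ne_iff.mp hgne
  simp only [Pi.zero_apply] at he₀
  set G : A → B → ℝ := fun p i => if h : (p, i) ∈ E then g ⟨(p, i), h⟩ else 0 with hG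
  have keyrow : ∀ p, ∑ i, G p i
      = ∑ e ∈ univ.filter (fun e : {e // e ∈ E} => (e : A × B).1 = p), g e := by
    intro p
    rw [← Finset.sum_filter_of_ne (p := fun i => (p, i) ∈ E)
      (by intro i _ h; by_contra hm; exact h (by simp only [hG, dif_neg hm]))]
    refine Finset.sum_bij' (fun i hi => (⟨(p, i), (Finset.mem_filter.mp hi).2⟩ : {e // e ∈ E}))
      (fun e _ => (e : A × B).2) ?_ ?_ ?_ ?_ ?_
    · intro i hi; simp
    · intro e he
      simp only [Finset.mem_filter, Finset.mem_univ, true_and] at he ⊢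
      rw [show (p, (e : A × B).2) = (e : A × B) from by rw [← he]]
      exact e.2
    · intro i hi; rfl
    · intro e he
      simp only [Finset.mem_filter, Finset.mem_univ, true_and] at he
      exact Subtype.ext (show (p, (e : A × B).2) = (e : A × B) from by rw [← he])
    · intro i hi
      simp only [hG, dif_pos (Finset.mem_filter.mp hi).2]
  have keycol : ∀ i, ∑ p, G p i
      = ∑ e ∈ univ.filter (fun e : {e // e ∈ E} => (e : A × B).2 = i), g e := by
    intro i
    rw [← Finset.sum_filter_of_ne (p := fun p => (p, i) ∈ E)
      (by intro p _ h; by_contra hm; exact h (by simp only [hG, dif_neg hm]))]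
    refine Finset.sum_bij' (fun p hp => (⟨(p, i), (Finset.mem_filter.mp hp).2⟩ : {e // e ∈ E}))
      (fun e _ => (e : A × B).1) ?_ ?_ ?_ ?_ ?_
    · intro p hp; simp
    · intro e he
      simp only [Finset.mem_filter, Finset.mem_univ, true_and] at he ⊢
      rw [show ((e : A × B).1, i) = (e : A × B) from by rw [← he]]
      exact e.2
    · intro p hp; rfl
    · intro e he
      simp only [Finset.mem_filter, Finset.mem_univ, true_and] at he
      exact Subtype.ext (show ((e : A × B).1, i) = (e : A × B) from by rw [← he])
    · intro p hp
      simp only [hG, dif_pos (Finset.mem_filter.mp hp).2]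
  have hrow : ∀ p, ∑ i, G p i = 0 := by
    intro p
    rw [keyrow p]
    exact congrFun (congrArg Prod.fst hLg) p
  have hcolne : ∀ i : B, i ≠ i₀ → ∑ p, G p i = 0 := by
    intro i hi
    rw [keycol i]
    exact congrFun (congrArg Prod.snd hLg) ⟨i, hi⟩
  have hcol : ∀ i, ∑ p, G p i = 0 := by
    intro i
    rcases eq_or_ne i i₀ with hii | hii
    · have htot : ∑ j, ∑ p, G p j = 0 := by
        rw [Finset.sum_comm]
        simp [hrow]
      rw [Finset.sum_eq_single i₀ (fun j _ hj => hcolne j hj) (by simp)] at htot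
      rw [hii]; exact htot
    · exact hcolne i hii
  refine ⟨G, ⟨(e₀ : A × B).1, (e₀ : A × B).2, ?_⟩, fun p i h => by simp only [hG, dif_neg h],
    hrow, hcol⟩
  have hmem : ((e₀ : A × B).1, (e₀ : A × B).2) ∈ E := by rw [Prod.mk.eta]; exact e₀.2
  simp only [hG, dif_pos hmem]
  convert he₀ using 2

/-- Points of `ℝ^d` with the Euclidean metric. -/
abbrev Pt (d : ℕ) := EuclideanSpace ℝ (Fin d)

/-- **Rounding a fractional capacitated assignment** (Section 3.3): if some
fractional assignment of the weighted points `(Q', w')` to the centers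
`Z = {z_1,…,z_k}` with capacity `t'` exists, then there is an integral assignment
`π` whose cost is at most the minimum cost of any fractional assignment, and whose
cluster sizes satisfy `s(π)_i ≤ t' + (k−1)·max_{p∈Q'} w'(p)` for every `i ∈ [k]`. -/
theorem stmt15 (r : ℝ) (hr : 1 ≤ r) (d k : ℕ) (hk : 1 ≤ k)
    (Q' : Finset (Pt d)) (w' : Pt d → ℝ) (hw' : ∀ p ∈ Q', 0 < w' p)
    (z : Fin k → Pt d) (hzinj : Function.Injective z)
    (t' : ℝ) (ht' : 0 ≤ t')
    (hfrac : ∃ f : {p // p ∈ Q'} → Fin k → ℝ, (∀ p i, 0 ≤ f p i) ∧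
        (∀ p, ∑ i : Fin k, f p i = w' p.1) ∧
        (∀ i : Fin k, ∑ p ∈ Q'.attach, f p i ≤ t')) :
    ∃ π : {p // p ∈ Q'} → Fin k,
      (∀ f : {p // p ∈ Q'} → Fin k → ℝ, (∀ p i, 0 ≤ f p i) →
          (∀ p, ∑ i : Fin k, f p i = w' p.1) →
          (∀ i : Fin k, ∑ p ∈ Q'.attach, f p i ≤ t') →
          ∑ p ∈ Q'.attach, w' p.1 * dist p.1 (z (π p)) ^ r ≤
            ∑ p ∈ Q'.attach, ∑ i : Fin k, f p i * dist p.1 (z i) ^ r) ∧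
      ∀ i : Fin k, (∑ p ∈ Q'.attach, if π p = i then w' p.1 else 0) ≤
          t' + ((k : ℝ) - 1) * sSup (w' '' (↑Q' : Set (Pt d))) := by
  classical
  simp only [Finset.attach_eq_univ] at hfrac ⊢
  rcases Q'.eq_empty_or_nonempty with hQ | hQ
  · refine ⟨fun _ => ⟨0, hk⟩, fun f _ _ _ => ?_, fun i => ?_⟩
    · subst hQ; simp
    · subst hQ; simpa [Real.sSup_empty] using ht'
  set P := {p // p ∈ Q'} with hP
  set W := sSup (w' '' (↑Q' : Set (Pt d))) with hW
  have hWb : ∀ p : P, w' p.1 ≤ W := by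
    intro p
    exact le_csSup ((Q'.finite_toSet.image w').bddAbove) ⟨p.1, p.2, rfl⟩
  have hW0 : 0 ≤ W := by
    obtain ⟨q, hq⟩ := hQ
    exact le_trans (hw' q hq).le (hWb ⟨q, hq⟩)
  set c : (P → Fin k → ℝ) → ℝ :=
    fun f => ∑ p : P, ∑ i : Fin k, f p i * dist p.1 (z i) ^ r with hc
  set K : Set (P → Fin k → ℝ) :=
    {f | (∀ p i, 0 ≤ f p i) ∧ (∀ p, ∑ i : Fin k, f p i = w' p.1) ∧
      (∀ i : Fin k, ∑ p : P, f p i ≤ t')} with hKdef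
  have hKne : K.Nonempty := by
    obtain ⟨f, h1, h2, h3⟩ := hfrac
    exact ⟨f, h1, h2, h3⟩
  -- compactness of the feasible region
  have hKcomp : IsCompact K := by
    have hScomp : IsCompact (Set.pi Set.univ (fun p : P => Set.pi Set.univ
        fun _ : Fin k => Set.Icc (0:ℝ) (w' p.1))) :=
      isCompact_univ_pi fun p => isCompact_univ_pi fun _ => isCompact_Icc
    have hsub : K ⊆ Set.pi Set.univ (fun p : P => Set.pi Set.univ
        fun _ : Fin k => Set.Icc (0:ℝ) (w' p.1)) := by
      intro f hf
      obtain ⟨h1, h2, _⟩ := hf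
      intro p _ i _
      refine ⟨h1 p i, ?_⟩
      rw [← h2 p]
      exact Finset.single_le_sum (fun j _ => h1 p j) (Finset.mem_univ i)
    have hclosed : IsClosed K := by
      rw [hKdef]
      have h1 : IsClosed {f : P → Fin k → ℝ | ∀ p i, 0 ≤ f p i} := by
        have : {f : P → Fin k → ℝ | ∀ p i, 0 ≤ f p i}
            = ⋂ p, ⋂ i, {f : P → Fin k → ℝ | 0 ≤ f p i} := by
          ext f; simp [Set.mem_iInter]
        rw [this]
        exact isClosed_iInter fun p => isClosed_iInter fun i =>
          isClosed_le continuous_const ((continuous_apply i).comp (continuous_apply p))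
      have h2 : IsClosed {f : P → Fin k → ℝ | ∀ p, ∑ i : Fin k, f p i = w' p.1} := by
        have : {f : P → Fin k → ℝ | ∀ p, ∑ i : Fin k, f p i = w' p.1}
            = ⋂ p, {f : P → Fin k → ℝ | ∑ i : Fin k, f p i = w' p.1} := by
          ext f; simp [Set.mem_iInter]
        rw [this]
        exact isClosed_iInter fun p => isClosed_eq
          (continuous_finset_sum _ fun i _ => (continuous_apply i).comp (continuous_apply p))
          continuous_const
      have h3 : IsClosed {f : P → Fin k → ℝ | ∀ i : Fin k, ∑ p : P, f p i ≤ t'} := by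
        have : {f : P → Fin k → ℝ | ∀ i : Fin k, ∑ p : P, f p i ≤ t'}
            = ⋂ i, {f : P → Fin k → ℝ | ∑ p : P, f p i ≤ t'} := by
          ext f; simp [Set.mem_iInter]
        rw [this]
        exact isClosed_iInter fun i => isClosed_le
          (continuous_finset_sum _ fun p _ => (continuous_apply i).comp (continuous_apply p))
          continuous_const
      have : {f : P → Fin k → ℝ | (∀ p i, 0 ≤ f p i) ∧ (∀ p, ∑ i : Fin k, f p i = w' p.1) ∧
          (∀ i : Fin k, ∑ p : P, f p i ≤ t')}
          = {f : P → Fin k → ℝ | ∀ p i, 0 ≤ f p i}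
            ∩ ({f : P → Fin k → ℝ | ∀ p, ∑ i : Fin k, f p i = w' p.1}
              ∩ {f : P → Fin k → ℝ | ∀ i : Fin k, ∑ p : P, f p i ≤ t'}) := by
        ext f; tauto
      rw [this]
      exact h1.inter (h2.inter h3)
    exact hScomp.of_isClosed_subset hclosed hsub
  have hccont : Continuous c := by
    apply continuous_finset_sum
    intro p _
    apply continuous_finset_sum
    intro i _
    exact (show Continuous fun f : P → Fin k → ℝ => f p i from
      (continuous_apply i).comp (continuous_apply p)).mul continuous_const
  obtain ⟨f₀, hf₀K, hf₀min⟩ := hKcomp.exists_isMinOn hKne hccont.continuousOn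
  -- a cost-minimizer with minimal support
  set M : Set (P → Fin k → ℝ) := {f | f ∈ K ∧ c f = c f₀} with hMdef
  set suppCard : (P → Fin k → ℝ) → ℕ :=
    fun f => (Finset.univ.filter (fun e : P × Fin k => f e.1 e.2 ≠ 0)).card with hsupp
  have hTne : (suppCard '' M).Nonempty := ⟨suppCard f₀, f₀, ⟨hf₀K, rfl⟩, rfl⟩
  obtain ⟨fs, hfsM, hfscard⟩ := Nat.sInf_mem hTne
  have hminsupp : ∀ f ∈ M, sInf (suppCard '' M) ≤ suppCard f :=
    fun f hf => Nat.sInf_le ⟨f, hf, rfl⟩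
  set E : Finset (P × Fin k) :=
    Finset.univ.filter (fun e : P × Fin k => fs e.1 e.2 ≠ 0) with hEdef
  have hEsupp : suppCard fs = E.card := rfl
  have hfsK : fs ∈ K := hfsM.1
  have hfseq : c fs = c f₀ := hfsM.2
  have hfs0 : ∀ p i, 0 ≤ fs p i := hfsK.1
  have hfspos : ∀ p i, (p, i) ∈ E → 0 < fs p i := by
    intro p i he
    exact lt_of_le_of_ne (hfs0 p i) (Ne.symm (Finset.mem_filter.mp he).2)
  -- linearity of the cost along perturbations
  have hclin : ∀ (H : P → Fin k → ℝ) (t : ℝ),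
      c (fun p i => fs p i + t * H p i) = c fs + t * c H := by
    intro H t
    simp only [hc, add_mul, Finset.sum_add_distrib, Finset.mul_sum, mul_assoc]
  have hpert : ∀ (H : P → Fin k → ℝ), (∀ p, ∑ i, H p i = 0) → (∀ i, ∑ p, H p i = 0) →
      ∀ t : ℝ, (∀ p i, 0 ≤ fs p i + t * H p i) → (fun p i => fs p i + t * H p i) ∈ K := by
    intro H hrow hcol t hnn
    refine ⟨hnn, fun p => ?_, fun i => ?_⟩
    · rw [Finset.sum_add_distrib, ← Finset.mul_sum, hrow p, mul_zero, add_zero]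
      exact hfsK.2.1 p
    · rw [Finset.sum_add_distrib, ← Finset.mul_sum, hcol i, mul_zero, add_zero]
      exact hfsK.2.2 i
  -- support bound: at most |P| + k − 1 support entries
  have hEcard : E.card < Fintype.card P + k := by
    by_contra hbig
    push_neg at hbig
    obtain ⟨G, ⟨p₁, i₁, hGne⟩, hGzero, hGrow, hGcol⟩ :=
      exists_kernel_vector (⟨0, hk⟩ : Fin k) E (by rwa [Fintype.card_fin])
    -- an epsilon of feasible movement
    have hEne : E.Nonempty := Finset.card_pos.mp (by omega)
    obtain ⟨e₁, he₁E, he₁min⟩ :=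
      E.exists_min_image (fun e => fs e.1 e.2 / (|G e.1 e.2| + 1)) hEne
    set ε := fs e₁.1 e₁.2 / (|G e₁.1 e₁.2| + 1) with hε
    have hεpos : 0 < ε := div_pos (hfspos e₁.1 e₁.2 (by rwa [Prod.mk.eta])) (by positivity)
    have hkey : ∀ p i, (p, i) ∈ E → ε * |G p i| ≤ fs p i := by
      intro p i he
      have h1 : ε ≤ fs p i / (|G p i| + 1) := he₁min (p, i) he
      have h2 : (0:ℝ) < |G p i| + 1 := by positivity
      rw [le_div_iff₀ h2] at h1
      nlinarith [abs_nonneg (G p i), hεpos.le]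
    have hnn : ∀ t : ℝ, |t| ≤ ε → ∀ p i, 0 ≤ fs p i + t * G p i := by
      intro t ht p i
      by_cases hmem : (p, i) ∈ E
      · have h1 : |t * G p i| ≤ ε * |G p i| := by
          rw [abs_mul]
          exact mul_le_mul_of_nonneg_right ht (abs_nonneg _)
        have h2 := hkey p i hmem
        have h3 := neg_abs_le (t * G p i)
        linarith
      · rw [hGzero p i hmem, mul_zero, add_zero]; exact hfs0 p i
    have hbound : ∀ t : ℝ, |t| ≤ ε → 0 ≤ t * c G := by
      intro t ht
      have hmem := hpert G hGrow hGcol t (hnn t ht)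
      have h1 : c f₀ ≤ c (fun p i => fs p i + t * G p i) := hf₀min hmem
      rw [hclin G t, hfseq] at h1
      linarith
    have hcG : c G = 0 := by
      have h1 := hbound ε (by rw [abs_of_pos hεpos])
      have h2 := hbound (-ε) (by rw [abs_neg, abs_of_pos hεpos])
      nlinarith
    -- moving until a support entry vanishes
    have main : ∀ H : P → Fin k → ℝ, (∀ p i, (p, i) ∉ E → H p i = 0) →
        (∀ p, ∑ i, H p i = 0) → (∀ i, ∑ p, H p i = 0) → c H = 0 →
        H p₁ i₁ < 0 → False := by
      intro H hH0 hHrow hHcol hcH hneg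
      have hS : (p₁, i₁) ∈ E := by
        by_contra h
        rw [hH0 p₁ i₁ h] at hneg
        exact lt_irrefl 0 hneg
      set S := E.filter (fun e => H e.1 e.2 < 0) with hSdef
      have hSne : S.Nonempty := ⟨(p₁, i₁), Finset.mem_filter.mpr ⟨hS, hneg⟩⟩
      obtain ⟨e₂, he₂S, he₂min⟩ :=
        S.exists_min_image (fun e => fs e.1 e.2 / (-H e.1 e.2)) hSne
      have he₂E : e₂ ∈ E := (Finset.mem_filter.mp he₂S).1
      have he₂neg : H e₂.1 e₂.2 < 0 := (Finset.mem_filter.mp he₂S).2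
      set ts := fs e₂.1 e₂.2 / (-H e₂.1 e₂.2) with hts
      have htsnn : 0 ≤ ts := div_nonneg (hfs0 _ _) (by linarith)
      have hf'nn : ∀ p i, 0 ≤ fs p i + ts * H p i := by
        intro p i
        by_cases hmem : (p, i) ∈ E
        · by_cases hsign : H p i < 0
          · have h1 : ts ≤ fs p i / (-H p i) :=
              he₂min (p, i) (Finset.mem_filter.mpr ⟨hmem, hsign⟩)
            rw [le_div_iff₀ (by linarith)] at h1
            nlinarith
          · push_neg at hsign
            nlinarith [hfs0 p i, mul_nonneg htsnn hsign]
        · rw [hH0 p i hmem, mul_zero, add_zero]; exact hfs0 p i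
      set f' : P → Fin k → ℝ := fun p i => fs p i + ts * H p i with hf'def
      have hf'K : f' ∈ K := hpert H hHrow hHcol ts hf'nn
      have hf'M : f' ∈ M := ⟨hf'K, by rw [hf'def, hclin H ts, hcH, mul_zero, add_zero, hfseq]⟩
      have he₂zero : f' e₂.1 e₂.2 = 0 := by
        have hHne : H e₂.1 e₂.2 ≠ 0 := he₂neg.ne
        have hdm := div_mul_cancel₀ (fs e₂.1 e₂.2) (neg_ne_zero.mpr hHne)
        have hkey' : ts * H e₂.1 e₂.2 = -fs e₂.1 e₂.2 := by
          calc ts * H e₂.1 e₂.2 = -(ts * -H e₂.1 e₂.2) := by ring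
            _ = -fs e₂.1 e₂.2 := by rw [hts, hdm]
        simp only [hf'def]
        linarith
      have hsub : Finset.univ.filter (fun e : P × Fin k => f' e.1 e.2 ≠ 0) ⊆ E.erase e₂ := by
        intro e he
        have hne : f' e.1 e.2 ≠ 0 := (Finset.mem_filter.mp he).2
        have heE : e ∈ E := by
          by_contra hmem
          apply hne
          have hmem' : (e.1, e.2) ∉ E := by rwa [Prod.mk.eta]
          simp only [hf'def]
          rw [hH0 e.1 e.2 hmem', mul_zero, add_zero]
          by_contra h
          exact hmem (Finset.mem_filter.mpr ⟨Finset.mem_univ _, h⟩)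
        refine Finset.mem_erase.mpr ⟨?_, heE⟩
        rintro rfl
        exact hne he₂zero
      have hcard : suppCard f' < suppCard fs := by
        rw [hEsupp]
        calc (Finset.univ.filter (fun e : P × Fin k => f' e.1 e.2 ≠ 0)).card
            ≤ (E.erase e₂).card := Finset.card_le_card hsub
          _ < E.card := Finset.card_erase_lt_of_mem he₂E
      have h1 := hminsupp f' hf'M
      omega
    rcases (Ne.lt_or_gt hGne) with hlt | hgt
    · exact main G hGzero hGrow hGcol hcG hlt
    · refine main (fun p i => -G p i)
        (fun p i h => by show -G p i = 0; rw [hGzero p i h, neg_zero])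
        (fun p => by show ∑ i, -G p i = 0; rw [Finset.sum_neg_distrib, hGrow p, neg_zero])
        (fun i => by show ∑ p, -G p i = 0; rw [Finset.sum_neg_distrib, hGcol i, neg_zero]) ?_
        (by show -G p₁ i₁ < 0; linarith)
      have hcneg : c (fun p i => -G p i) = -c G := by
        simp [hc, neg_mul, Finset.sum_neg_distrib]
      rw [hcneg, hcG, neg_zero]
  -- degrees
  set deg : P → ℕ := fun p => (Finset.univ.filter (fun i => fs p i ≠ 0)).card with hdeg
  have hdegpos : ∀ p : P, (Finset.univ.filter (fun i => fs p i ≠ 0)).Nonempty := by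
    intro p
    rw [Finset.filter_nonempty_iff]
    by_contra h
    push_neg at h
    have hzero : ∑ i, fs p i = 0 := Finset.sum_eq_zero (fun i hi => h i hi)
    rw [hfsK.2.1 p] at hzero
    exact absurd hzero (hw' p.1 p.2).ne'
  have hdegsum : ∑ p : P, deg p = E.card := by
    rw [hEdef, Finset.card_eq_sum_card_fiberwise
      (f := Prod.fst) (t := Finset.univ) (fun e _ => Finset.mem_univ _)]
    apply Finset.sum_congr rfl
    intro p _
    have himg : (Finset.univ.filter (fun e : P × Fin k => fs e.1 e.2 ≠ 0)).filter
          (fun e => e.1 = p)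
        = (Finset.univ.filter (fun i => fs p i ≠ 0)).image (fun i => (p, i)) := by
      ext e
      simp only [Finset.mem_filter, Finset.mem_image, Finset.mem_univ, true_and]
      constructor
      · rintro ⟨hne, h1⟩
        subst h1
        exact ⟨e.2, hne, Prod.mk.eta⟩
      · rintro ⟨i, hi, rfl⟩
        exact ⟨hi, rfl⟩
    rw [himg, Finset.card_image_of_injective _ (fun a b h => by simpa using h)]
  set ns := Finset.univ.filter (fun p : P => 2 ≤ deg p) with hns
  have hns_lt : ns.card < k := by
    have hdeg1 : ∀ p : P, 1 ≤ deg p := fun p => Finset.card_pos.mpr (hdegpos p)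
    have h2s : 2 * ns.card ≤ ∑ p ∈ ns, deg p := by
      calc 2 * ns.card = ∑ _p ∈ ns, 2 := by rw [Finset.sum_const, smul_eq_mul, mul_comm]
        _ ≤ ∑ p ∈ ns, deg p := Finset.sum_le_sum (fun p hp => (Finset.mem_filter.mp hp).2)
    have h1s : (Finset.univ.filter (fun p : P => ¬ 2 ≤ deg p)).card
        ≤ ∑ p ∈ Finset.univ.filter (fun p : P => ¬ 2 ≤ deg p), deg p := by
      calc (Finset.univ.filter (fun p : P => ¬ 2 ≤ deg p)).card
          = ∑ _p ∈ Finset.univ.filter (fun p : P => ¬ 2 ≤ deg p), 1 := by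
            rw [Finset.sum_const, smul_eq_mul, mul_one]
        _ ≤ ∑ p ∈ Finset.univ.filter (fun p : P => ¬ 2 ≤ deg p), deg p :=
            Finset.sum_le_sum (fun p _ => hdeg1 p)
    have hsplitsum : ∑ p ∈ ns, deg p
        + ∑ p ∈ Finset.univ.filter (fun p : P => ¬ 2 ≤ deg p), deg p = ∑ p : P, deg p := by
      rw [hns]
      exact Finset.sum_filter_add_sum_filter_not Finset.univ _ deg
    have hcards : ns.card + (Finset.univ.filter (fun p : P => ¬ 2 ≤ deg p)).card
        = Fintype.card P := by
      rw [hns, Finset.card_filter_add_card_filter_not, Finset.card_univ]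
    omega
  -- the integral assignment
  have hπex : ∀ p : P, ∃ i : Fin k, fs p i ≠ 0 ∧
      ∀ j, fs p j ≠ 0 → dist p.1 (z i) ^ r ≤ dist p.1 (z j) ^ r := by
    intro p
    obtain ⟨i, hiS, himin⟩ := (Finset.univ.filter (fun i => fs p i ≠ 0)).exists_min_image
      (fun i => dist p.1 (z i) ^ r) (hdegpos p)
    exact ⟨i, (Finset.mem_filter.mp hiS).2,
      fun j hj => himin j (Finset.mem_filter.mpr ⟨Finset.mem_univ _, hj⟩)⟩
  choose π hπ1 hπ2 using hπex
  refine ⟨π, ?_, ?_⟩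
  · -- cost bound
    intro f hf1 hf2 hf3
    have hfK : f ∈ K := ⟨hf1, hf2, hf3⟩
    have step1 : ∑ p : P, w' p.1 * dist p.1 (z (π p)) ^ r ≤ c fs := by
      rw [hc]
      apply Finset.sum_le_sum
      intro p _
      rw [← hfsK.2.1 p, Finset.sum_mul]
      apply Finset.sum_le_sum
      intro i _
      by_cases hzero : fs p i = 0
      · rw [hzero]; simp
      · exact mul_le_mul_of_nonneg_left (hπ2 p i hzero) (hfs0 p i)
    have step2 : c fs ≤ c f := by rw [hfseq]; exact hf₀min hfK
    exact le_trans step1 step2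
  · -- size bound
    intro i
    rw [← Finset.sum_filter]
    set A := Finset.univ.filter (fun p : P => π p = i) with hA
    rw [← Finset.sum_filter_add_sum_filter_not A (fun p => 2 ≤ deg p) (fun p => w' p.1)]
    have hb1 : ∑ p ∈ A.filter (fun p => ¬ 2 ≤ deg p), w' p.1 ≤ t' := by
      have heq : ∀ p ∈ A.filter (fun p => ¬ 2 ≤ deg p), w' p.1 = fs p i := by
        intro p hp
        obtain ⟨hpA, hdeg1⟩ := Finset.mem_filter.mp hp
        have hπpi : π p = i := (Finset.mem_filter.mp hpA).2
        have hdegone : deg p = 1 := by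
          have hpos : 0 < deg p := Finset.card_pos.mpr (hdegpos p)
          omega
        obtain ⟨a, ha⟩ := Finset.card_eq_one.mp hdegone
        have hmemπ : π p ∈ Finset.univ.filter (fun j => fs p j ≠ 0) :=
          Finset.mem_filter.mpr ⟨Finset.mem_univ _, hπ1 p⟩
        rw [ha, Finset.mem_singleton] at hmemπ
        have hzero : ∀ j, j ≠ π p → fs p j = 0 := by
          intro j hj
          by_contra h
          have hmemj : j ∈ Finset.univ.filter (fun j => fs p j ≠ 0) :=
            Finset.mem_filter.mpr ⟨Finset.mem_univ _, h⟩
          rw [ha, Finset.mem_singleton] at hmemj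
          exact hj (hmemj.trans hmemπ.symm)
        rw [← hfsK.2.1 p, Finset.sum_eq_single (π p) (fun j _ hj => hzero j hj) (by simp), hπpi]
      rw [Finset.sum_congr rfl heq]
      refine le_trans (Finset.sum_le_sum_of_subset_of_nonneg
        (Finset.subset_univ _) (fun p _ _ => hfs0 p i)) (hfsK.2.2 i)
    have hb2 : ∑ p ∈ A.filter (fun p => 2 ≤ deg p), w' p.1 ≤ ((k:ℝ) - 1) * W := by
      calc ∑ p ∈ A.filter (fun p => 2 ≤ deg p), w' p.1
          ≤ ∑ p ∈ ns, w' p.1 := by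
            refine Finset.sum_le_sum_of_subset_of_nonneg ?_ (fun p hp _ => (hw' p.1 p.2).le)
            intro p hp
            exact Finset.mem_filter.mpr ⟨Finset.mem_univ _, (Finset.mem_filter.mp hp).2⟩
        _ ≤ ns.card • W := Finset.sum_le_card_nsmul ns _ W (fun p _ => hWb p)
        _ = (ns.card : ℝ) * W := nsmul_eq_mul _ _
        _ ≤ ((k:ℝ) - 1) * W := by
            apply mul_le_mul_of_nonneg_right _ hW0
            have h := Nat.succ_le_of_lt hns_lt
            have h2 : (ns.card : ℝ) + 1 ≤ (k : ℝ) := by exact_mod_cast h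
            linarith
    linarith
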